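/- Let a : [-1,0] → ℝ be Lipschitz continuous with a(s) > 0 for all s, let μ_cr := (∫_{-1}^0 a(t)^3 dt)^{-1}, and let F > 0 satisfy 1/F^2 < μ_cr (supercriticality). Then there exists ε_0 > 0 such that for every ε ∈ (0, ε_0) there exists a continuously differentiable function Φ̃ : [-1,0] → ℝ, with s ↦ Φ̃'(s)/a(s)^3 continuously differentiable, solving the initial value problem (Φ̃'/a^3)'(s) + (ε/F^2) Φ̃(s) = 0 on (-1,0), Φ̃(-1) = ε, Φ̃'(-1) = 1, and such that moreover Φ̃(s) > 0 and Φ̃'(s) > 0 for all s ∈ [-1,0], and -Φ̃'(0)/a(0)^3 + Φ̃(0)/F^2 < 0. -/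

import Mathlib

open Set MeasureTheory intervalIntegral BoundedContinuousFunction

noncomputable def prjI (s : ℝ) : ℝ := max (-1) (min s 0)

lemma prjI_cont : Continuous prjI := by
  unfold prjI; fun_prop

lemma prjI_mem (s : ℝ) : prjI s ∈ Icc (-1:ℝ) 0 := by
  constructor
  · exact le_max_left _ _
  · exact max_le (by norm_num) (min_le_right _ _)

lemma prjI_eq {s : ℝ} (hs : s ∈ Icc (-1:ℝ) 0) : prjI s = s := by
  unfold prjI
  rw [min_eq_left hs.2, max_eq_right hs.1]

lemma cont_primitive {u : ℝ → ℝ} (hu : Continuous u) :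
    Continuous (fun t => ∫ x in (-1:ℝ)..t, u x) :=
  continuous_iff_continuousAt.2 fun t =>
    ((hu.integral_hasStrictDerivAt (-1) t).hasDerivAt).continuousAt

lemma aux_fixed_point (b : ℝ → ℝ) (hb : Continuous b) (B : ℝ)
    (hbB : ∀ t, |b t ^ 3| ≤ B) (ε c κ : ℝ) (hκ : 0 ≤ κ) (hκB : κ * B ≤ 1/2) :
    ∃ Φ : ℝ → ℝ, Continuous Φ ∧ (∀ s, |Φ s| ≤ 2 * (|ε| + B * |c|)) ∧
      ∀ s, Φ s = ε + ∫ t in (-1:ℝ)..(prjI s),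
        b t ^ 3 * (c - κ * ∫ x in (-1:ℝ)..t, Φ x) := by
  have hB : 0 ≤ B := le_trans (abs_nonneg _) (hbB 0)
  -- key integral estimate
  have key : ∀ (w : ℝ → ℝ) (C : ℝ), 0 ≤ C → (∀ t ∈ Icc (-1:ℝ) 0, |w t| ≤ C) → ∀ s : ℝ,
      |∫ t in (-1:ℝ)..(prjI s), b t ^ 3 * w t| ≤ B * C := by
    intro w C hC hw s
    have hmem : ∀ t ∈ Set.uIoc (-1:ℝ) (prjI s), t ∈ Icc (-1:ℝ) 0 := by
      intro t ht
      have h1 : Set.uIoc (-1:ℝ) (prjI s) = Ioc (-1) (prjI s) := by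
        rw [uIoc_of_le (prjI_mem s).1]
      rw [h1] at ht
      exact ⟨ht.1.le, le_trans ht.2 (prjI_mem s).2⟩
    have h2 : |∫ t in (-1:ℝ)..(prjI s), b t ^ 3 * w t| ≤ (B * C) * |prjI s - (-1)| := by
      rw [← Real.norm_eq_abs]
      apply intervalIntegral.norm_integral_le_of_norm_le_const
      intro t ht
      have htI := hmem t ht
      calc ‖b t ^ 3 * w t‖ = |b t ^ 3| * |w t| := abs_mul _ _
        _ ≤ B * C := mul_le_mul (hbB t) (hw t htI) (abs_nonneg _) hB
    have h3 : |prjI s - (-1)| ≤ 1 := by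
      have := prjI_mem s
      rw [abs_le]; constructor <;> [linarith [this.1]; linarith [this.2]]
    calc |∫ t in (-1:ℝ)..(prjI s), b t ^ 3 * w t| ≤ (B * C) * |prjI s - (-1)| := h2
      _ ≤ (B * C) * 1 := by
          exact mul_le_mul_of_nonneg_left h3 (mul_nonneg hB hC)
      _ = B * C := mul_one _
  -- inner integral estimate
  have inner_est : ∀ (u : ℝ →ᵇ ℝ) (t : ℝ), t ∈ Icc (-1:ℝ) 0 →
      |∫ x in (-1:ℝ)..t, u x| ≤ ‖u‖ := by
    intro u t ht
    have h2 : |∫ x in (-1:ℝ)..t, u x| ≤ ‖u‖ * |t - (-1)| := by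
      rw [← Real.norm_eq_abs]
      exact intervalIntegral.norm_integral_le_of_norm_le_const fun x _ => u.norm_coe_le_norm x
    have h3 : |t - (-1)| ≤ 1 := by rw [abs_le]; constructor <;> [linarith [ht.1]; linarith [ht.2]]
    calc |∫ x in (-1:ℝ)..t, u x| ≤ ‖u‖ * |t - (-1)| := h2
      _ ≤ ‖u‖ * 1 := mul_le_mul_of_nonneg_left h3 (norm_nonneg u)
      _ = ‖u‖ := mul_one _
  -- psi bound
  have psi_bd : ∀ (u : ℝ →ᵇ ℝ) (t : ℝ), t ∈ Icc (-1:ℝ) 0 →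
      |c - κ * ∫ x in (-1:ℝ)..t, u x| ≤ |c| + κ * ‖u‖ := by
    intro u t ht
    calc |c - κ * ∫ x in (-1:ℝ)..t, u x| ≤ |c| + |κ * ∫ x in (-1:ℝ)..t, u x| := abs_sub _ _
      _ = |c| + κ * |∫ x in (-1:ℝ)..t, u x| := by rw [abs_mul, abs_of_nonneg hκ]
      _ ≤ |c| + κ * ‖u‖ := by
          have := inner_est u t ht
          nlinarith
  have hTc : ∀ u : ℝ →ᵇ ℝ, Continuous (fun s =>
      ε + ∫ t in (-1:ℝ)..(prjI s), b t ^ 3 * (c - κ * ∫ x in (-1:ℝ)..t, u x)) := by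
    intro u
    have hψ : Continuous (fun t => b t ^ 3 * (c - κ * ∫ x in (-1:ℝ)..t, u x)) := by
      apply Continuous.mul (by fun_prop)
      exact continuous_const.sub (continuous_const.mul (cont_primitive u.continuous))
    exact continuous_const.add ((cont_primitive hψ).comp prjI_cont)
  have hTb : ∀ u : ℝ →ᵇ ℝ, ∀ s : ℝ,
      ‖ε + ∫ t in (-1:ℝ)..(prjI s), b t ^ 3 * (c - κ * ∫ x in (-1:ℝ)..t, u x)‖
        ≤ |ε| + B * (|c| + κ * ‖u‖) := by
    intro u s
    have h1 := key (fun t => c - κ * ∫ x in (-1:ℝ)..t, u x) (|c| + κ * ‖u‖)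
      (by positivity) (psi_bd u) s
    calc ‖ε + _‖ ≤ |ε| + |∫ t in (-1:ℝ)..(prjI s), b t ^ 3 * (c - κ * ∫ x in (-1:ℝ)..t, u x)| :=
        abs_add_le _ _
      _ ≤ |ε| + B * (|c| + κ * ‖u‖) := by linarith
  let T : (ℝ →ᵇ ℝ) → (ℝ →ᵇ ℝ) := fun u =>
    BoundedContinuousFunction.ofNormedAddCommGroup _ (hTc u) _ (hTb u)
  have hTapp : ∀ (u : ℝ →ᵇ ℝ) (s : ℝ), T u s =
      ε + ∫ t in (-1:ℝ)..(prjI s), b t ^ 3 * (c - κ * ∫ x in (-1:ℝ)..t, u x) := by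
    intro u s; rfl
  -- contraction
  have hlip : ∀ u v : ℝ →ᵇ ℝ, dist (T u) (T v) ≤ (1/2 : ℝ) * dist u v := by
    intro u v
    apply BoundedContinuousFunction.dist_le (by positivity) |>.2
    intro s
    have hintu : IntervalIntegrable (fun t => b t ^ 3 * (c - κ * ∫ x in (-1:ℝ)..t, u x))
        volume (-1) (prjI s) := by
      apply Continuous.intervalIntegrable
      exact (hb.pow 3).mul (continuous_const.sub (continuous_const.mul (cont_primitive u.continuous)))
    have hintv : IntervalIntegrable (fun t => b t ^ 3 * (c - κ * ∫ x in (-1:ℝ)..t, v x))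
        volume (-1) (prjI s) := by
      apply Continuous.intervalIntegrable
      exact (hb.pow 3).mul (continuous_const.sub (continuous_const.mul (cont_primitive v.continuous)))
    rw [Real.dist_eq, hTapp, hTapp]
    have heq : (ε + ∫ t in (-1:ℝ)..(prjI s), b t ^ 3 * (c - κ * ∫ x in (-1:ℝ)..t, u x))
        - (ε + ∫ t in (-1:ℝ)..(prjI s), b t ^ 3 * (c - κ * ∫ x in (-1:ℝ)..t, v x))
        = ∫ t in (-1:ℝ)..(prjI s), b t ^ 3 *
            (κ * ((∫ x in (-1:ℝ)..t, v x) - (∫ x in (-1:ℝ)..t, u x))) := by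
      rw [add_sub_add_left_eq_sub, ← intervalIntegral.integral_sub hintu hintv]
      apply intervalIntegral.integral_congr
      intro t _
      dsimp only
      ring
    rw [heq]
    have hw : ∀ t ∈ Icc (-1:ℝ) 0,
        |κ * ((∫ x in (-1:ℝ)..t, v x) - (∫ x in (-1:ℝ)..t, u x))| ≤ κ * dist u v := by
      intro t ht
      have hsub : (∫ x in (-1:ℝ)..t, v x) - (∫ x in (-1:ℝ)..t, u x)
          = ∫ x in (-1:ℝ)..t, (v x - u x) := by
        rw [intervalIntegral.integral_sub (v.continuous.intervalIntegrable _ _)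
          (u.continuous.intervalIntegrable _ _)]
      rw [hsub, abs_mul, abs_of_nonneg hκ]
      have h2 : |∫ x in (-1:ℝ)..t, (v x - u x)| ≤ dist u v * |t - (-1)| := by
        rw [← Real.norm_eq_abs]
        apply intervalIntegral.norm_integral_le_of_norm_le_const
        intro x _
        have := BoundedContinuousFunction.dist_coe_le_dist (f := u) (g := v) x
        rw [Real.dist_eq] at this
        rw [Real.norm_eq_abs, abs_sub_comm]
        exact this
      have h3 : |t - (-1)| ≤ 1 := by rw [abs_le]; constructor <;> [linarith [ht.1]; linarith [ht.2]]
      have h4 : dist u v * |t - (-1)| ≤ dist u v * 1 :=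
        mul_le_mul_of_nonneg_left h3 dist_nonneg
      have := dist_nonneg (x := u) (y := v)
      nlinarith
    have h5 := key (fun t => κ * ((∫ x in (-1:ℝ)..t, v x) - (∫ x in (-1:ℝ)..t, u x)))
      (κ * dist u v) (by positivity) hw s
    have h6 : B * (κ * dist u v) ≤ (1/2) * dist u v := by
      have := dist_nonneg (x := u) (y := v)
      nlinarith
    linarith
  have hcontr : ContractingWith (1/2 : NNReal) T := by
    constructor
    · simpa using NNReal.half_lt_self (one_ne_zero)
    · apply LipschitzWith.of_dist_le_mul
      intro u v
      calc dist (T u) (T v) ≤ (1/2 : ℝ) * dist u v := hlip u v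
        _ = ((1/2 : NNReal) : ℝ) * dist u v := by norm_num
  set Φb := hcontr.fixedPoint T with hΦb
  have hfix : T Φb = Φb := hcontr.fixedPoint_isFixedPt
  have hformula : ∀ s, Φb s =
      ε + ∫ t in (-1:ℝ)..(prjI s), b t ^ 3 * (c - κ * ∫ x in (-1:ℝ)..t, Φb x) := by
    intro s
    conv_lhs => rw [← hfix]
    exact hTapp Φb s
  have hnorm : ‖Φb‖ ≤ 2 * (|ε| + B * |c|) := by
    have h1 : ‖Φb‖ ≤ |ε| + B * (|c| + κ * ‖Φb‖) := by
      rw [← hfix]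
      apply (BoundedContinuousFunction.norm_le (by positivity)).2
      intro s
      rw [hfix]
      rw [show Φb s = _ from hformula s]
      exact hTb Φb s
    have h2 : B * κ * ‖Φb‖ ≤ (1/2) * ‖Φb‖ := by
      have := norm_nonneg Φb
      nlinarith
    have := norm_nonneg Φb
    nlinarith
  refine ⟨Φb, Φb.continuous, fun s => le_trans (Φb.norm_coe_le_norm s) hnorm, hformula⟩


set_option maxHeartbeats 1000000 in
/-- **Lemma 3.3** (existence of the auxiliary function `Φ̃`). For a supercritical
Froude number `F` (i.e. `1/F² < μcr = (∫_{-1}^0 a³)⁻¹`), for all sufficiently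
small `ε > 0` there is a `C¹` solution `Φ̃` (with `Φ̃'/a³` also `C¹`) of the
initial value problem `(Φ̃'/a³)' + (ε/F²) Φ̃ = 0` on `(-1,0)`, `Φ̃(-1) = ε`,
`Φ̃'(-1) = 1`, which moreover satisfies `Φ̃ > 0` and `Φ̃' > 0` on `[-1,0]` and
`-Φ̃'(0)/a(0)³ + Φ̃(0)/F² < 0`. -/
theorem auxiliary_function_supercritical
    (a : ℝ → ℝ) (K : NNReal)
    (hlip : LipschitzOnWith K a (Set.Icc (-1 : ℝ) 0))
    (hpos : ∀ s ∈ Set.Icc (-1 : ℝ) 0, 0 < a s)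
    (μcr : ℝ) (hμ : μcr = (∫ t in (-1 : ℝ)..0, a t ^ 3)⁻¹)
    (F : ℝ) (hF : 0 < F) (hsupercritical : 1 / F ^ 2 < μcr) :
    ∃ ε₀ > (0 : ℝ), ∀ ε ∈ Set.Ioo (0 : ℝ) ε₀,
      ∃ Φ Φ' g' : ℝ → ℝ,
        -- Φ is C¹ on [-1,0] with derivative Φ'
        (∀ s ∈ Set.Icc (-1 : ℝ) 0,
          HasDerivWithinAt Φ (Φ' s) (Set.Icc (-1 : ℝ) 0) s) ∧
        ContinuousOn Φ' (Set.Icc (-1 : ℝ) 0) ∧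
        -- Φ'/a³ is C¹ on [-1,0] with derivative g'
        (∀ s ∈ Set.Icc (-1 : ℝ) 0,
          HasDerivWithinAt (fun t => Φ' t / a t ^ 3) (g' s) (Set.Icc (-1 : ℝ) 0) s) ∧
        ContinuousOn g' (Set.Icc (-1 : ℝ) 0) ∧
        -- the ODE (Φ'/a³)' + (ε/F²) Φ = 0 on (-1,0)
        (∀ s ∈ Set.Ioo (-1 : ℝ) 0, g' s + ε / F ^ 2 * Φ s = 0) ∧
        -- initial conditions
        Φ (-1) = ε ∧ Φ' (-1) = 1 ∧
        -- positivity
        (∀ s ∈ Set.Icc (-1 : ℝ) 0, 0 < Φ s ∧ 0 < Φ' s) ∧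
        -- strict sign of the boundary operator at s = 0
        -(Φ' 0) / a 0 ^ 3 + Φ 0 / F ^ 2 < 0 := by
  have hm1 : (-1:ℝ) ∈ Icc (-1:ℝ) 0 := by norm_num
  have h0 : (0:ℝ) ∈ Icc (-1:ℝ) 0 := by norm_num
  have hF2 : (0:ℝ) < F ^ 2 := by positivity
  -- the extended coefficient
  set b : ℝ → ℝ := fun t => a (prjI t) with hbdef
  have hb : Continuous b := hlip.continuousOn.comp_continuous prjI_cont prjI_mem
  have hbpos : ∀ t, 0 < b t := fun t => hpos _ (prjI_mem t)
  have hbeq : ∀ t ∈ Icc (-1:ℝ) 0, b t = a t := by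
    intro t ht; rw [hbdef]; simp only [prjI_eq ht]
  set A := a (-1) with hAdef
  have hApos : 0 < A := hpos _ hm1
  have hbub : ∀ t, b t ≤ A + K := by
    intro t
    have h1 : dist (a (prjI t)) (a (-1)) ≤ (K:ℝ) * dist (prjI t) (-1) :=
      hlip.dist_le_mul _ (prjI_mem t) _ hm1
    have h2 : dist (prjI t) (-1) ≤ 1 := by
      have := prjI_mem t
      rw [Real.dist_eq, abs_le]
      constructor <;> [linarith [this.1]; linarith [this.2]]
    have h3 : dist (a (prjI t)) (a (-1)) ≤ (K:ℝ) := by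
      calc dist (a (prjI t)) (a (-1)) ≤ (K:ℝ) * dist (prjI t) (-1) := h1
        _ ≤ (K:ℝ) * 1 := mul_le_mul_of_nonneg_left h2 K.coe_nonneg
        _ = (K:ℝ) := mul_one _
    rw [Real.dist_eq] at h3
    have := abs_le.1 h3
    simp only [hbdef]
    linarith [this.2]
  set B := (A + (K:ℝ)) ^ 3 with hBdef
  have hBpos : 0 < B := by rw [hBdef]; exact pow_pos (by linarith [K.coe_nonneg]) 3
  have hbB : ∀ t, |b t ^ 3| ≤ B := by
    intro t
    rw [abs_of_nonneg (pow_pos (hbpos t) 3).le]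
    exact pow_le_pow_left₀ (hbpos t).le (hbub t) 3
  set c := (A ^ 3)⁻¹ with hcdef
  have hc : 0 < c := by positivity
  set J := ∫ t in (-1:ℝ)..0, a t ^ 3 with hJdef
  have hsup : 1 / F ^ 2 < J⁻¹ := by rw [← hμ]; exact hsupercritical
  have hJ : 0 < J := by
    by_contra h
    push_neg at h
    have : J⁻¹ ≤ 0 := inv_nonpos.2 h
    have : (0:ℝ) < 1 / F ^ 2 := by positivity
    linarith
  have hJF : J < F ^ 2 := by
    have h1 : J * (1 / F ^ 2) < J * J⁻¹ := mul_lt_mul_of_pos_left hsup hJ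
    rw [mul_inv_cancel₀ hJ.ne'] at h1
    rw [mul_one_div] at h1
    exact (div_lt_one hF2).1 h1
  set N := 2 * (1 + B * c) with hNdef
  have hN : 0 < N := by positivity
  set δ := c - c * J / F ^ 2 with hδdef
  have hδ : 0 < δ := by
    have h1 : J / F ^ 2 < 1 := (div_lt_one hF2).2 hJF
    have h2 : c * (J / F ^ 2) < c := by nlinarith
    rw [hδdef, mul_div_assoc]
    linarith
  set E := 1 + N + N * J / F ^ 2 with hEdef
  have hE : 0 < E := by positivity
  clear_value A B c J N δ E
  have hden1 : (0:ℝ) < 2 * B + 1 := by linarith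
  have hden2 : (0:ℝ) < 2 * N := by linarith
  refine ⟨min 1 (min (F^2/(2*B+1)) (min (c*F^2/(2*N)) (δ*F^2/(E+1)))),
    lt_min one_pos (lt_min (div_pos hF2 hden1)
      (lt_min (div_pos (mul_pos hc hF2) hden2)
        (div_pos (mul_pos hδ hF2) (by linarith)))), ?_⟩
  rintro ε ⟨hε0, hε1⟩
  have hε1' : ε ≤ 1 := le_trans hε1.le (min_le_left _ _)
  have hεB : ε < F^2/(2*B+1) := lt_of_lt_of_le hε1 (le_trans (min_le_right _ _) (min_le_left _ _))
  have hεN : ε < c*F^2/(2*N) := lt_of_lt_of_le hε1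
    (le_trans (min_le_right _ _) (le_trans (min_le_right _ _) (min_le_left _ _)))
  have hεE : ε < δ*F^2/(E+1) := lt_of_lt_of_le hε1
    (le_trans (min_le_right _ _) (le_trans (min_le_right _ _) (min_le_right _ _)))
  have hκB : ε / F ^ 2 * B ≤ 1 / 2 := by
    rw [div_mul_eq_mul_div, div_le_div_iff₀ hF2 (by norm_num : (0:ℝ) < 2)]
    have := (lt_div_iff₀ (by positivity : (0:ℝ) < 2*B+1)).1 hεB
    nlinarith
  obtain ⟨Φ, hΦc, hΦbd, hform⟩ := aux_fixed_point b hb B hbB ε c (ε / F ^ 2)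
    (by positivity) hκB
  have hΦN : ∀ s, |Φ s| ≤ N := by
    intro s
    have h1 := hΦbd s
    have h2 : 2 * (|ε| + B * |c|) ≤ N := by
      rw [abs_of_pos hε0, abs_of_pos hc, hNdef]
      nlinarith
    linarith
  set ψ : ℝ → ℝ := fun t => c - ε / F ^ 2 * ∫ x in (-1:ℝ)..t, Φ x with hψdef
  have hψcont : Continuous ψ := by
    rw [hψdef]
    exact continuous_const.sub (continuous_const.mul (cont_primitive hΦc))
  have hinteg : Continuous (fun t => b t ^ 3 * ψ t) := (hb.pow 3).mul hψcont
  have hformI : ∀ s ∈ Icc (-1:ℝ) 0, Φ s = ε + ∫ t in (-1:ℝ)..s, b t ^ 3 * ψ t := by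
    intro s hs
    rw [hform s, prjI_eq hs]
  have hinner_bd : ∀ t ∈ Icc (-1:ℝ) 0, |∫ x in (-1:ℝ)..t, Φ x| ≤ N := by
    intro t ht
    have h2 : |∫ x in (-1:ℝ)..t, Φ x| ≤ N * |t - (-1)| := by
      rw [← Real.norm_eq_abs]
      exact intervalIntegral.norm_integral_le_of_norm_le_const fun x _ => hΦN x
    have h3 : |t - (-1)| ≤ 1 := by
      rw [abs_le]; constructor <;> [linarith [ht.1]; linarith [ht.2]]
    nlinarith [hN.le]
  have hεF : 0 ≤ ε / F ^ 2 := by positivity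
  have hψub : ∀ t ∈ Icc (-1:ℝ) 0, ψ t ≤ c + ε / F ^ 2 * N := by
    intro t ht
    have h1 := (abs_le.1 (hinner_bd t ht)).1
    have h2 : -(ε / F ^ 2 * ∫ x in (-1:ℝ)..t, Φ x) ≤ ε / F ^ 2 * N := by nlinarith
    rw [hψdef]; dsimp only; linarith
  have hψlb : ∀ t ∈ Icc (-1:ℝ) 0, c / 2 ≤ ψ t := by
    intro t ht
    have h1 := (abs_le.1 (hinner_bd t ht)).2
    have h2 : ε / F ^ 2 * ∫ x in (-1:ℝ)..t, Φ x ≤ ε / F ^ 2 * N := by nlinarith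
    have h3 : ε / F ^ 2 * N ≤ c / 2 := by
      rw [div_mul_eq_mul_div, div_le_div_iff₀ hF2 (by norm_num : (0:ℝ) < 2)]
      have := (lt_div_iff₀ (by positivity : (0:ℝ) < 2 * N)).1 hεN
      nlinarith
    rw [hψdef]; dsimp only; linarith
  have hG : ∀ s, HasDerivAt (fun r => ε + ∫ t in (-1:ℝ)..r, b t ^ 3 * ψ t)
      (b s ^ 3 * ψ s) s := by
    intro s
    exact ((hinteg.integral_hasStrictDerivAt (-1) s).hasDerivAt).const_add ε
  have hψderiv : ∀ s, HasDerivAt ψ (-(ε / F ^ 2 * Φ s)) s := by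
    intro s
    rw [hψdef]
    have h1 : HasDerivAt (fun t => ∫ x in (-1:ℝ)..t, Φ x) (Φ s) s :=
      (hΦc.integral_hasStrictDerivAt (-1) s).hasDerivAt
    simpa using (h1.const_mul (ε / F ^ 2)).const_sub c
  refine ⟨Φ, fun s => b s ^ 3 * ψ s, fun s => -(ε / F ^ 2 * Φ s),
    ?_, ?_, ?_, ?_, ?_, ?_, ?_, ?_, ?_⟩
  · intro s hs
    exact ((hG s).hasDerivWithinAt).congr (fun y hy => hformI y hy) (hformI s hs)
  · exact hinteg.continuousOn
  · intro s hs
    have heqn : ∀ t ∈ Icc (-1:ℝ) 0, b t ^ 3 * ψ t / a t ^ 3 = ψ t := by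
      intro t ht
      rw [hbeq t ht]
      exact mul_div_cancel_left₀ _ (pow_ne_zero 3 (hpos t ht).ne')
    exact ((hψderiv s).hasDerivWithinAt).congr (fun y hy => heqn y hy) (heqn s hs)
  · exact ((continuous_const.mul hΦc).neg).continuousOn
  · intro s _
    dsimp only
    ring
  · rw [hform (-1), prjI_eq hm1, intervalIntegral.integral_same, add_zero]
  · show b (-1) ^ 3 * ψ (-1) = 1
    rw [hψdef]
    dsimp only
    rw [intervalIntegral.integral_same, mul_zero, sub_zero, hbeq (-1) hm1, ← hAdef, hcdef]
    exact mul_inv_cancel₀ (pow_ne_zero 3 hApos.ne')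
  · intro s hs
    constructor
    · rw [hformI s hs]
      have hint : 0 ≤ ∫ t in (-1:ℝ)..s, b t ^ 3 * ψ t := by
        apply intervalIntegral.integral_nonneg hs.1
        intro u hu
        have huI : u ∈ Icc (-1:ℝ) 0 := ⟨hu.1, le_trans hu.2 hs.2⟩
        exact mul_nonneg (pow_pos (hbpos u) 3).le (le_trans (by linarith : (0:ℝ) ≤ c / 2)
          (hψlb u huI))
      linarith
    · exact mul_pos (pow_pos (hbpos s) 3)
        (lt_of_lt_of_le (by linarith : (0:ℝ) < c / 2) (hψlb s hs))
  · show -(b 0 ^ 3 * ψ 0) / a 0 ^ 3 + Φ 0 / F ^ 2 < 0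
    have hb0 : b 0 = a 0 := hbeq 0 h0
    have ha0 : (0:ℝ) < a 0 := hpos 0 h0
    have hΦ'0 : -(b 0 ^ 3 * ψ 0) / a 0 ^ 3 = -ψ 0 := by
      rw [hb0, neg_div, mul_div_cancel_left₀ _ (pow_ne_zero 3 ha0.ne')]
    rw [hΦ'0]
    have hψ0 : c - ε / F ^ 2 * N ≤ ψ 0 := by
      have h1 := (abs_le.1 (hinner_bd 0 h0)).2
      have h2 : ε / F ^ 2 * ∫ x in (-1:ℝ)..0, Φ x ≤ ε / F ^ 2 * N := by nlinarith
      rw [hψdef]; dsimp only; linarith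
    have hΦ0 : Φ 0 ≤ ε + (c + ε / F ^ 2 * N) * J := by
      rw [hformI 0 h0]
      have hmono : (∫ t in (-1:ℝ)..0, b t ^ 3 * ψ t)
          ≤ ∫ t in (-1:ℝ)..0, b t ^ 3 * (c + ε / F ^ 2 * N) := by
        apply intervalIntegral.integral_mono_on (by norm_num) (hinteg.intervalIntegrable _ _)
          (((hb.pow 3).mul continuous_const).intervalIntegrable _ _)
        intro u hu
        exact mul_le_mul_of_nonneg_left (hψub u hu) (pow_pos (hbpos u) 3).le
      have hJb : (∫ t in (-1:ℝ)..0, b t ^ 3 * (c + ε / F ^ 2 * N))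
          = (c + ε / F ^ 2 * N) * J := by
        rw [intervalIntegral.integral_mul_const, mul_comm]
        congr 1
        rw [hJdef]
        apply intervalIntegral.integral_congr
        intro t ht
        rw [Set.uIcc_of_le (by norm_num : (-1:ℝ) ≤ 0)] at ht
        dsimp only
        rw [hbeq t ht]
      rw [hJb] at hmono
      linarith
    have hkey : ε * E < δ * F ^ 2 := by
      have h1 := (lt_div_iff₀ (by positivity : (0:ℝ) < E + 1)).1 hεE
      nlinarith
    have hgoal : -ψ 0 + Φ 0 / F ^ 2 = (Φ 0 - ψ 0 * F ^ 2) / F ^ 2 := by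
      field_simp
      ring
    rw [hgoal]
    apply div_neg_of_neg_of_pos ?_ hF2
    have h2 : c * F ^ 2 - ε * N ≤ ψ 0 * F ^ 2 := by
      have hm := mul_le_mul_of_nonneg_right hψ0 hF2.le
      have hx : (c - ε / F ^ 2 * N) * F ^ 2 = c * F ^ 2 - ε * N := by
        field_simp
      calc c * F ^ 2 - ε * N = (c - ε / F ^ 2 * N) * F ^ 2 := hx.symm
        _ ≤ ψ 0 * F ^ 2 := hm
    have h3 : (c + ε / F ^ 2 * N) * J = c * J + ε * N * J / F ^ 2 := by field_simp
    have h4 : ε * E = ε + ε * N + ε * N * J / F ^ 2 := by rw [hEdef]; ring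
    have h5 : δ * F ^ 2 = c * F ^ 2 - c * J := by rw [hδdef]; field_simp
    nlinarith [hΦ0, h2, hkey, h3, h4, h5]
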